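/- Let Θ ∈ {0,1}^{n×K} be a membership matrix (each row has exactly one 1) with community sizes n₁,…,n_K all at least c·n for some c > 0, write Θ = Θ̃Λ where Λ = diag(√n₁,…,√n_K) and Θ̃ has orthonormal columns. If B₁,…,B_L are symmetric K×K matrices with Σ_ℓ B_ℓ² ⪰ cL·I_K, then Σ_ℓ (ρΘB_ℓΘᵀ)² ⪰ c³·L·n²·ρ²·Θ̃Θ̃ᵀ as positive semidefinite matrices; in particular, the K-th largest eigenvalue of Σ_ℓ (ρΘB_ℓΘᵀ)² is at least c³Ln²ρ². -/

import Mathlib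

open Matrix

lemma psd_smul' {K : ℕ} {A : Matrix (Fin K) (Fin K) ℝ} (hA : A.PosSemidef) {a : ℝ}
    (ha : 0 ≤ a) : (a • A).PosSemidef := by
  refine ⟨?_, fun x => ?_⟩
  · show (a • A)ᴴ = a • A
    rw [conjTranspose_smul, hA.1]; simp
  · exact (hA.smul ha).2 x

lemma psd_add' {K : ℕ} {A B : Matrix (Fin K) (Fin K) ℝ} (hA : A.PosSemidef)
    (hB : B.PosSemidef) : (A + B).PosSemidef := by
  refine ⟨hA.1.add hB.1, fun x => ?_⟩
  simpa [mul_add, add_mul] using add_nonneg (hA.2 x) (hB.2 x)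

lemma psd_sum' {K L : ℕ} {A : Fin L → Matrix (Fin K) (Fin K) ℝ}
    (hA : ∀ ℓ, (A ℓ).PosSemidef) : (∑ ℓ, A ℓ).PosSemidef := by
  classical
  exact Finset.sum_induction A _ (fun a b ha hb => psd_add' ha hb) Matrix.PosSemidef.zero
    (fun ℓ _ => hA ℓ)

/-- Let `Θ ∈ {0,1}^{n×K}` be a membership matrix (given by an assignment `θ`) whose
community sizes are all at least `c·n` for some `c > 0`, and write `Θ = Θ̃Λ` where
`Λ = diag(√n₁,…,√n_K)`, so `Θ̃ = ΘΛ⁻¹` has orthonormal columns. If `B₁,…,B_L` are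
symmetric `K×K` matrices with `∑_ℓ B_ℓ² ⪰ cL·I_K`, then
`∑_ℓ (ρΘB_ℓΘᵀ)² ⪰ c³Ln²ρ²·Θ̃Θ̃ᵀ` in the Loewner order; in particular the `K`-th largest
eigenvalue of `∑_ℓ (ρΘB_ℓΘᵀ)²` is at least `c³Ln²ρ²`. -/
theorem signal_lower_bound (n K L : ℕ) (θ : Fin n → Fin K) (c ρ : ℝ)
    (hc : 0 < c) (hρ : 0 < ρ)
    (hsize : ∀ k, c * n ≤ ((Finset.univ.filter (fun i => θ i = k)).card : ℝ))
    (B : Fin L → Matrix (Fin K) (Fin K) ℝ)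
    (hBsymm : ∀ ℓ, (B ℓ).IsSymm)
    (hBlow : ((∑ ℓ, B ℓ * B ℓ) - (c * L) • (1 : Matrix (Fin K) (Fin K) ℝ)).PosSemidef) :
    let Θ : Matrix (Fin n) (Fin K) ℝ := Matrix.of fun i k => if θ i = k then 1 else 0
    let Θtil : Matrix (Fin n) (Fin K) ℝ :=
      Θ * Matrix.diagonal (fun k =>
        (Real.sqrt ((Finset.univ.filter (fun i => θ i = k)).card : ℝ))⁻¹)
    ((∑ ℓ, (ρ • (Θ * B ℓ * Θᵀ)) * (ρ • (Θ * B ℓ * Θᵀ)))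
      - (c ^ 3 * L * n ^ 2 * ρ ^ 2) • (Θtil * Θtilᵀ)).PosSemidef := by
  intro Θ Θtil
  classical
  set N : Fin K → ℝ := fun k => ((Finset.univ.filter (fun i => θ i = k)).card : ℝ) with hNdef
  have hN0 : ∀ k, c * n ≤ N k := hsize
  have hNn : ∀ k, 0 ≤ N k := fun k =>
    le_trans (mul_nonneg hc.le (Nat.cast_nonneg n)) (hN0 k)
  set D : Matrix (Fin K) (Fin K) ℝ :=
    Matrix.diagonal (fun k => (Real.sqrt (N k))⁻¹) with hDdef
  have hΘtil : Θtil = Θ * D := rfl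
  have hTT : Θᵀ * Θ = Matrix.diagonal N := by
    ext k k'
    simp only [Matrix.mul_apply, Matrix.transpose_apply, Θ, Matrix.of_apply]
    by_cases h : k = k'
    · subst h
      rw [Matrix.diagonal_apply_eq]
      have hcongr : ∀ i ∈ Finset.univ,
          ((if θ i = k then (1:ℝ) else 0) * if θ i = k then 1 else 0)
            = if θ i = k then 1 else 0 := by
        intro i _; by_cases hi : θ i = k <;> simp [hi]
      rw [Finset.sum_congr rfl hcongr, hNdef]
      simp [Finset.sum_boole]
    · rw [Matrix.diagonal_apply_ne _ h]
      refine Finset.sum_eq_zero fun i _ => ?_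
      by_cases hi : θ i = k <;> by_cases hi' : θ i = k' <;> simp_all
  set S : Matrix (Fin K) (Fin K) ℝ := ∑ ℓ, B ℓ * Matrix.diagonal N * B ℓ with hSdef
  set M : Matrix (Fin K) (Fin K) ℝ := S - (c^3 * L * n^2) • (D * D) with hMdef
  have key : (∑ ℓ, (ρ • (Θ * B ℓ * Θᵀ)) * (ρ • (Θ * B ℓ * Θᵀ)))
      - (c ^ 3 * L * n ^ 2 * ρ ^ 2) • (Θtil * Θtilᵀ) = (ρ^2) • (Θ * M * Θᵀ) := by
    have e1 : ∀ ℓ, (ρ • (Θ * B ℓ * Θᵀ)) * (ρ • (Θ * B ℓ * Θᵀ))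
        = (ρ^2) • (Θ * (B ℓ * Matrix.diagonal N * B ℓ) * Θᵀ) := by
      intro ℓ
      rw [Matrix.smul_mul, Matrix.mul_smul, smul_smul, ← sq]
      congr 1
      calc Θ * B ℓ * Θᵀ * (Θ * B ℓ * Θᵀ)
          = Θ * (B ℓ * ((Θᵀ * Θ) * (B ℓ * Θᵀ))) := by
            simp only [Matrix.mul_assoc]
        _ = Θ * (B ℓ * Matrix.diagonal N * B ℓ) * Θᵀ := by
            rw [hTT]; simp only [Matrix.mul_assoc]
    have e2 : Θtil * Θtilᵀ = Θ * (D * D) * Θᵀ := by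
      rw [hΘtil, Matrix.transpose_mul, hDdef, Matrix.diagonal_transpose]
      simp only [Matrix.mul_assoc]
    rw [Finset.sum_congr rfl (fun ℓ _ => e1 ℓ), ← Finset.smul_sum, ← Matrix.sum_mul,
      ← Matrix.mul_sum, e2, hMdef, Matrix.mul_sub, Matrix.sub_mul, smul_sub,
      Matrix.mul_smul, Matrix.smul_mul, smul_smul, ← hSdef]
    congr 2
    ring
  rw [key]
  have hMps : M.PosSemidef := by
    have hT1 : (∑ ℓ, B ℓ * Matrix.diagonal (fun k => N k - c*n) * B ℓ).PosSemidef := by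
      refine psd_sum' fun ℓ => ?_
      have hdiag : (Matrix.diagonal (fun k => N k - c*n)).PosSemidef :=
        Matrix.posSemidef_diagonal_iff.mpr (fun k => sub_nonneg.mpr (hN0 k))
      have h := hdiag.mul_mul_conjTranspose_same (B ℓ)
      rwa [Matrix.conjTranspose_eq_transpose_of_trivial, (hBsymm ℓ).eq] at h
    have hT2 : ((c*n) • ((∑ ℓ, B ℓ * B ℓ) - (c * L) • 1)).PosSemidef :=
      psd_smul' hBlow (mul_nonneg hc.le (Nat.cast_nonneg n))
    have hT3 : ((c^2*L*n) • (1 : Matrix (Fin K) (Fin K) ℝ)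
        - (c^3*L*n^2) • (D*D)).PosSemidef := by
      rw [hDdef, Matrix.diagonal_mul_diagonal, ← Matrix.diagonal_one,
        ← Matrix.diagonal_smul, ← Matrix.diagonal_smul, Matrix.diagonal_sub]
      refine Matrix.posSemidef_diagonal_iff.mpr fun k => ?_
      simp only [Pi.sub_apply, Pi.smul_apply, smul_eq_mul, mul_one]
      rcases Nat.eq_zero_or_pos n with hn | hn
      · simp [hn]
      · have hnp : (0:ℝ) < n := by exact_mod_cast hn
        have hx : 0 < N k := lt_of_lt_of_le (mul_pos hc hnp) (hN0 k)
        have hinv : (Real.sqrt (N k))⁻¹ * (Real.sqrt (N k))⁻¹ = (N k)⁻¹ := by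
          rw [← mul_inv, Real.mul_self_sqrt (hNn k)]
        rw [hinv]
        have h1 : (N k) * (N k)⁻¹ = 1 := mul_inv_cancel₀ hx.ne'
        have h2 : (0:ℝ) ≤ (N k)⁻¹ := inv_nonneg.mpr hx.le
        have hL : (0:ℝ) ≤ L := Nat.cast_nonneg L
        have h3 : c^3*(L:ℝ)*n^2 ≤ c^2*L*n * N k := by
          nlinarith [mul_le_mul_of_nonneg_left (hN0 k)
            (show (0:ℝ) ≤ c^2*L*n by positivity)]
        have h4 : c^3*(L:ℝ)*n^2*(N k)⁻¹ ≤ c^2*L*n := by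
          calc c^3*(L:ℝ)*n^2*(N k)⁻¹ ≤ (c^2*L*n * N k)*(N k)⁻¹ :=
                mul_le_mul_of_nonneg_right h3 h2
            _ = c^2*L*n := by rw [mul_assoc, h1, mul_one]
        linarith
    have hsplit : M = (∑ ℓ, B ℓ * Matrix.diagonal (fun k => N k - c*n) * B ℓ)
        + ((c*n) • ((∑ ℓ, B ℓ * B ℓ) - (c * L) • 1))
        + ((c^2*L*n) • (1 : Matrix (Fin K) (Fin K) ℝ) - (c^3*L*n^2) • (D*D)) := by
      have hd : Matrix.diagonal N = Matrix.diagonal (fun k => N k - c*n)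
          + (c*n) • (1 : Matrix (Fin K) (Fin K) ℝ) := by
        rw [← Matrix.diagonal_one, ← Matrix.diagonal_smul, Matrix.diagonal_add]
        congr 1; funext k; simp
      have hS : S = (∑ ℓ, B ℓ * Matrix.diagonal (fun k => N k - c*n) * B ℓ)
          + (c*n) • (∑ ℓ, B ℓ * B ℓ) := by
        rw [hSdef, Finset.smul_sum, ← Finset.sum_add_distrib]
        refine Finset.sum_congr rfl fun ℓ _ => ?_
        rw [hd, Matrix.mul_add, Matrix.add_mul, Matrix.mul_smul, Matrix.smul_mul,
          Matrix.mul_one]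
      rw [hMdef, hS]
      module
    rw [hsplit]
    exact psd_add' (psd_add' hT1 hT2) hT3
  have h := hMps.mul_mul_conjTranspose_same Θ
  rw [Matrix.conjTranspose_eq_transpose_of_trivial] at h
  exact psd_smul' h (sq_nonneg ρ)
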